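/- Let an n-player cake-cutting instance be in class X(k), and let (A_1,…,A_n) be an envy-free contiguous allocation in which some player i's interval A_i intersects the interior of a piece P owned by i but does not contain P, with V_i(P \ A_i) > 0. Then there exists an envy-free contiguous allocation with strictly greater utilitarian welfare. In particular, an envy-free contiguous allocation of maximal utilitarian welfare never gives any player only a part (of positive remaining value) of a piece owned by him. -/

import Mathlib

open MeasureTheory Set

/-- An `n`-player cake-cutting instance: continuous nonnegative density functions
on `[0,1]`, each of total integral `1`. -/
structure CakeInstance (n : ℕ) where
  d : Fin n → ℝ → ℝ
  cont : ∀ i, ContinuousOn (d i) (Set.Icc 0 1)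
  nonneg : ∀ i, ∀ x ∈ Set.Icc (0:ℝ) 1, 0 ≤ d i x
  total : ∀ i, ∫ x in (0:ℝ)..1, d i x = 1

namespace CakeInstance

/-- Value of player `i` for the interval `[a,b]`. -/
noncomputable def ival {n : ℕ} (C : CakeInstance n) (i : Fin n) (a b : ℝ) : ℝ :=
  ∫ x in a..b, C.d i x

/-- Value of player `i` for a set `S`. -/
noncomputable def sval {n : ℕ} (C : CakeInstance n) (i : Fin n) (S : Set ℝ) : ℝ :=
  ∫ x in S, C.d i x

end CakeInstance

/-- A contiguous allocation: weakly increasing cut points `x 0 = 0 ≤ … ≤ x n = 1`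
together with a permutation `σ` assigning the `j`-th interval `[x j, x (j+1)]`
to player `σ j`. -/
structure ContigAlloc (n : ℕ) where
  x : Fin (n+1) → ℝ
  mono : Monotone x
  first : x 0 = 0
  last : x (Fin.last n) = 1
  σ : Equiv.Perm (Fin n)

/-- The (closed) interval received by player `i` in a contiguous allocation. -/
def cpiece {n : ℕ} (A : ContigAlloc n) (i : Fin n) : Set ℝ :=
  Set.Icc (A.x (A.σ.symm i).castSucc) (A.x (A.σ.symm i).succ)

/-- Value of player `i` for the interval received by player `j`. -/
noncomputable def cval {n : ℕ} (C : CakeInstance n) (A : ContigAlloc n) (i j : Fin n) : ℝ :=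
  C.ival i (A.x (A.σ.symm j).castSucc) (A.x (A.σ.symm j).succ)

/-- Utilitarian welfare of a contiguous allocation. -/
noncomputable def cWelfare {n : ℕ} (C : CakeInstance n) (A : ContigAlloc n) : ℝ :=
  ∑ i, cval C A i i

/-- Egalitarian welfare of a contiguous allocation. -/
noncomputable def cEgal {n : ℕ} (C : CakeInstance n) (A : ContigAlloc n) : ℝ :=
  ⨅ i, cval C A i i

/-- A contiguous allocation is envy-free if nobody prefers another player's interval. -/
def cEnvyFree {n : ℕ} (C : CakeInstance n) (A : ContigAlloc n) : Prop :=
  ∀ i j, cval C A i j ≤ cval C A i i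

/-- A `k`-piece allocation: each player `i` receives the union of (at most) `k`
closed intervals `[lo i m, hi i m] ⊆ [0,1]` (possibly degenerate); all these
intervals are pairwise non-overlapping and together they cover `[0,1]`. -/
structure KPieceAlloc (n k : ℕ) where
  lo : Fin n → Fin k → ℝ
  hi : Fin n → Fin k → ℝ
  le : ∀ i m, lo i m ≤ hi i m
  sub : ∀ i m, Set.Icc (lo i m) (hi i m) ⊆ Set.Icc (0:ℝ) 1
  nonoverlap : ∀ i m i' m', (i, m) ≠ (i', m') →
      Set.Ioo (lo i m) (hi i m) ∩ Set.Ioo (lo i' m') (hi i' m') = ∅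
  cover : (⋃ i, ⋃ m, Set.Icc (lo i m) (hi i m)) = Set.Icc (0:ℝ) 1

/-- Value of player `i` for the portion received by player `j` in a `k`-piece allocation. -/
noncomputable def kval {n k : ℕ} (C : CakeInstance n) (A : KPieceAlloc n k) (i j : Fin n) : ℝ :=
  ∑ m, C.ival i (A.lo j m) (A.hi j m)

/-- Utilitarian welfare of a `k`-piece allocation. -/
noncomputable def kWelfare {n k : ℕ} (C : CakeInstance n) (A : KPieceAlloc n k) : ℝ :=
  ∑ i, kval C A i i

/-- Egalitarian welfare of a `k`-piece allocation. -/
noncomputable def kEgal {n k : ℕ} (C : CakeInstance n) (A : KPieceAlloc n k) : ℝ :=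
  ⨅ i, kval C A i i

/-- A `k`-piece allocation is envy-free if nobody prefers another player's portion. -/
def kEnvyFree {n k : ℕ} (C : CakeInstance n) (A : KPieceAlloc n k) : Prop :=
  ∀ i j, kval C A i j ≤ kval C A i i

/-- A witness that an `n`-player cake-cutting instance lies in the class `X(k)`:
cut points `0 = c 0 < c 1 < … < c (n*k) = 1` and an ownership map under which each
player owns exactly `k` of the pieces `[c j, c (j+1)]` and values the unowned pieces `0`. -/
structure XkWitness {n : ℕ} (C : CakeInstance n) (k : ℕ) where
  c : Fin (n*k+1) → ℝ
  mono : StrictMono c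
  first : c 0 = 0
  last : c (Fin.last (n*k)) = 1
  owner : Fin (n*k) → Fin n
  ownCount : ∀ i : Fin n, (Finset.univ.filter fun j => owner j = i).card = k
  zeroVal : ∀ (i : Fin n) (j : Fin (n*k)), owner j ≠ i →
      C.ival i (c j.castSucc) (c j.succ) = 0

/-- The `j`-th owned piece, as a set. -/
def XkWitness.pieceSet {n k : ℕ} {C : CakeInstance n} (W : XkWitness C k)
    (j : Fin (n*k)) : Set ℝ :=
  Set.Icc (W.c j.castSucc) (W.c j.succ)

/-- Value of player `i` for the `j`-th owned piece. -/
noncomputable def XkWitness.pieceVal {n k : ℕ} {C : CakeInstance n} (W : XkWitness C k)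
    (i : Fin n) (j : Fin (n*k)) : ℝ :=
  C.ival i (W.c j.castSucc) (W.c j.succ)

/-- A `k`-piece allocation gives each player exactly the pieces he owns:
every owned piece occurs among its owner's allocated intervals. -/
def XkWitness.givesOwnedPieces {n k : ℕ} {C : CakeInstance n} (W : XkWitness C k)
    (A : KPieceAlloc n k) : Prop :=
  ∀ j : Fin (n*k), ∃ m : Fin k,
    A.lo (W.owner j) m = W.c j.castSucc ∧ A.hi (W.owner j) m = W.c j.succ


section Aux

open CakeInstance

lemma aux_ii {n : ℕ} (C : CakeInstance n) (ℓ : Fin n) {a b : ℝ}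
    (ha : a ∈ Set.Icc (0:ℝ) 1) (hb : b ∈ Set.Icc (0:ℝ) 1) :
    IntervalIntegrable (C.d ℓ) volume a b :=
  ((C.cont ℓ).mono (Set.uIcc_subset_Icc ha hb)).intervalIntegrable

lemma aux_nonneg {n : ℕ} (C : CakeInstance n) (ℓ : Fin n) {a b : ℝ}
    (ha : a ∈ Set.Icc (0:ℝ) 1) (hb : b ∈ Set.Icc (0:ℝ) 1) (hab : a ≤ b) :
    0 ≤ C.ival ℓ a b := by
  apply intervalIntegral.integral_nonneg hab
  intro x hx
  exact C.nonneg ℓ x ⟨ha.1.trans hx.1, hx.2.trans hb.2⟩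

lemma aux_zero {n : ℕ} (C : CakeInstance n) (ℓ : Fin n) {cj cj1 u v : ℝ}
    (h0 : (0:ℝ) ≤ cj) (h1 : cj1 ≤ 1) (hz : C.ival ℓ cj cj1 = 0)
    (h2 : cj ≤ u) (h3 : u ≤ v) (h4 : v ≤ cj1) : C.ival ℓ u v = 0 := by
  have m0 : cj ∈ Set.Icc (0:ℝ) 1 := ⟨h0, by linarith⟩
  have mu : u ∈ Set.Icc (0:ℝ) 1 := ⟨by linarith, by linarith⟩
  have mv : v ∈ Set.Icc (0:ℝ) 1 := ⟨by linarith, by linarith⟩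
  have m1 : cj1 ∈ Set.Icc (0:ℝ) 1 := ⟨by linarith, h1⟩
  have e : C.ival ℓ cj u + C.ival ℓ u v + C.ival ℓ v cj1 = C.ival ℓ cj cj1 := by
    unfold CakeInstance.ival
    rw [intervalIntegral.integral_add_adjacent_intervals (aux_ii C ℓ m0 mu) (aux_ii C ℓ mu mv),
        intervalIntegral.integral_add_adjacent_intervals
          ((aux_ii C ℓ m0 mu).trans (aux_ii C ℓ mu mv)) (aux_ii C ℓ mv m1)]
  have n1 := aux_nonneg C ℓ m0 mu h2
  have n2 := aux_nonneg C ℓ mu mv h3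
  have n3 := aux_nonneg C ℓ mv m1 h4
  linarith

lemma aux_min_le {n : ℕ} (C : CakeInstance n) (i : Fin n) {u v : ℝ} (c : ℝ)
    (hu : u ∈ Set.Icc (0:ℝ) 1) (hv : v ∈ Set.Icc (0:ℝ) 1) (huv : u ≤ v) :
    C.ival i (min u c) (min v c) ≤ C.ival i u v := by
  have h1 : min u c ≤ min v c := min_le_min huv le_rfl
  unfold CakeInstance.ival
  rw [intervalIntegral.integral_of_le h1, intervalIntegral.integral_of_le huv]
  apply setIntegral_mono_set
  · exact ((C.cont i).integrableOn_Icc).mono_set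
      (fun x hx => ⟨hu.1.trans hx.1.le, hx.2.trans hv.2⟩)
  · exact ae_restrict_of_forall_mem measurableSet_Ioc
      (fun x hx => C.nonneg i x ⟨hu.1.trans hx.1.le, hx.2.trans hv.2⟩)
  · apply HasSubset.Subset.eventuallyLE
    intro x hx
    constructor
    · have hxc : x ≤ c := hx.2.trans (min_le_right v c)
      have hlt : min u c < x := hx.1
      rcases le_total u c with h | h
      · rwa [min_eq_left h] at hlt
      · rw [min_eq_right h] at hlt; linarith
    · exact hx.2.trans (min_le_left v c)

lemma aux_max_le {n : ℕ} (C : CakeInstance n) (i : Fin n) {u v : ℝ} (c : ℝ)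
    (hu : u ∈ Set.Icc (0:ℝ) 1) (hv : v ∈ Set.Icc (0:ℝ) 1) (huv : u ≤ v) :
    C.ival i (max u c) (max v c) ≤ C.ival i u v := by
  have h1 : max u c ≤ max v c := max_le_max huv le_rfl
  unfold CakeInstance.ival
  rw [intervalIntegral.integral_of_le h1, intervalIntegral.integral_of_le huv]
  apply setIntegral_mono_set
  · exact ((C.cont i).integrableOn_Icc).mono_set
      (fun x hx => ⟨hu.1.trans hx.1.le, hx.2.trans hv.2⟩)
  · exact ae_restrict_of_forall_mem measurableSet_Ioc
      (fun x hx => C.nonneg i x ⟨hu.1.trans hx.1.le, hx.2.trans hv.2⟩)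
  · apply HasSubset.Subset.eventuallyLE
    intro x hx
    constructor
    · exact lt_of_le_of_lt (le_max_left u c) hx.1
    · have hle : x ≤ max v c := hx.2
      rcases le_total c v with h | h
      · rwa [max_eq_left h] at hle
      · rw [max_eq_right h] at hle
        have hcx := lt_of_le_of_lt (le_max_right u c) hx.1
        linarith

/-- Cut points of the improved allocation: push the cut points on player `p`'s left
down to `cj` and those on his right up to `cj1` whenever they lie inside `(cj, cj1)`. -/
def shiftX {n : ℕ} (A : ContigAlloc n) (p : Fin n) (cj cj1 : ℝ) : Fin (n+1) → ℝ :=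
  fun t => if t ≤ p.castSucc then min (A.x t) cj else max (A.x t) cj1

lemma shiftX_mono {n : ℕ} (A : ContigAlloc n) (p : Fin n) {cj cj1 : ℝ} (hcc : cj ≤ cj1) :
    Monotone (shiftX A p cj cj1) := by
  intro s t hst
  unfold shiftX
  by_cases ht : t ≤ p.castSucc
  · rw [if_pos (hst.trans ht), if_pos ht]
    exact min_le_min (A.mono hst) le_rfl
  · by_cases hs : s ≤ p.castSucc
    · rw [if_pos hs, if_neg ht]
      exact (min_le_right _ _).trans (hcc.trans (le_max_right _ _))
    · rw [if_neg hs, if_neg ht]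
      exact max_le_max (A.mono hst) le_rfl

lemma shiftX_first {n : ℕ} (A : ContigAlloc n) (p : Fin n) {cj : ℝ} (cj1 : ℝ)
    (h0 : (0:ℝ) ≤ cj) : shiftX A p cj cj1 0 = 0 := by
  unfold shiftX
  rw [if_pos (Fin.zero_le _), A.first, min_eq_left h0]

lemma shiftX_last {n : ℕ} (A : ContigAlloc n) (p : Fin n) (cj : ℝ) {cj1 : ℝ}
    (h1 : cj1 ≤ 1) : shiftX A p cj cj1 (Fin.last n) = 1 := by
  unfold shiftX
  rw [if_neg (not_le.2 (Fin.castSucc_lt_last p)), A.last, max_eq_left h1]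

/-- The improved allocation. -/
def shiftAlloc {n : ℕ} (A : ContigAlloc n) (p : Fin n) (cj cj1 : ℝ)
    (hcc : cj ≤ cj1) (h0 : (0:ℝ) ≤ cj) (h1 : cj1 ≤ 1) : ContigAlloc n :=
  ⟨shiftX A p cj cj1, shiftX_mono A p hcc, shiftX_first A p cj1 h0,
   shiftX_last A p cj h1, A.σ⟩

end Aux

/-- In an instance in `X(k)`, if an envy-free contiguous allocation gives
player `i` an interval meeting the interior of a piece he owns, without containing that
piece and leaving behind a part of positive value to `i`, then some envy-free contiguous
allocation has strictly greater utilitarian welfare. -/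
theorem partial_own_piece_not_optimal (n k : ℕ) (C : CakeInstance n) (W : XkWitness C k)
    (A : ContigAlloc n) (hA : cEnvyFree C A)
    (i : Fin n) (j : Fin (n*k)) (hown : W.owner j = i)
    (hmeet : (cpiece A i ∩ Set.Ioo (W.c j.castSucc) (W.c j.succ)).Nonempty)
    (hnsub : ¬ W.pieceSet j ⊆ cpiece A i)
    (hval : 0 < C.sval i (W.pieceSet j \ cpiece A i)) :
    ∃ B : ContigAlloc n, cEnvyFree C B ∧ cWelfare C A < cWelfare C B := by
  classical
  set p : Fin n := A.σ.symm i with hpdef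
  set cj : ℝ := W.c j.castSucc with hcjdef
  set cj1 : ℝ := W.c j.succ with hcj1def
  have hx01 : ∀ t, A.x t ∈ Set.Icc (0:ℝ) 1 := fun t =>
    ⟨by rw [← A.first]; exact A.mono (Fin.zero_le t),
     by rw [← A.last]; exact A.mono (Fin.le_last t)⟩
  have hc01 : ∀ s, W.c s ∈ Set.Icc (0:ℝ) 1 := fun s =>
    ⟨by rw [← W.first]; exact W.mono.monotone (Fin.zero_le s),
     by rw [← W.last]; exact W.mono.monotone (Fin.le_last s)⟩
  have hcc : cj ≤ cj1 := (W.mono (Fin.castSucc_lt_succ : j.castSucc < j.succ)).le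
  have hcj0 : (0:ℝ) ≤ cj := (hc01 _).1
  have hcj11 : cj1 ≤ 1 := (hc01 _).2
  have hab : A.x p.castSucc ≤ A.x p.succ := A.mono (Fin.castSucc_le_succ p)
  obtain ⟨y, hyA, hyP⟩ := hmeet
  simp only [cpiece, Set.mem_Icc] at hyA
  simp only [Set.mem_Ioo] at hyP
  rw [← hpdef] at hyA
  have hacj1 : A.x p.castSucc < cj1 := lt_of_le_of_lt hyA.1 hyP.2
  have hcjb : cj < A.x p.succ := lt_of_lt_of_le hyP.1 hyA.2
  set B : ContigAlloc n := shiftAlloc A p cj cj1 hcc hcj0 hcj11 with hBdef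
  have hBx01 : ∀ t, shiftX A p cj cj1 t ∈ Set.Icc (0:ℝ) 1 := fun t =>
    ⟨by rw [← shiftX_first A p cj1 hcj0]; exact shiftX_mono A p hcc (Fin.zero_le t),
     by rw [← shiftX_last A p cj hcj11]; exact shiftX_mono A p hcc (Fin.le_last t)⟩
  have hcvalB : ∀ ℓ m, cval C B ℓ m
      = C.ival ℓ (shiftX A p cj cj1 (A.σ.symm m).castSucc)
          (shiftX A p cj cj1 (A.σ.symm m).succ) := fun ℓ m => rfl
  have hzval : ∀ ℓ, ℓ ≠ i → C.ival ℓ cj cj1 = 0 := fun ℓ hℓ =>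
    W.zeroVal ℓ j (by rw [hown]; exact hℓ.symm)
  have hcorr : ∀ ℓ, ℓ ≠ i → ∀ t, C.ival ℓ (shiftX A p cj cj1 t) (A.x t) = 0 := by
    intro ℓ hℓ t
    simp only [shiftX]
    by_cases ht : t ≤ p.castSucc
    · rw [if_pos ht]
      rcases le_total (A.x t) cj with h | h
      · rw [min_eq_left h]
        simp [CakeInstance.ival]
      · rw [min_eq_right h]
        exact aux_zero C ℓ hcj0 hcj11 (hzval ℓ hℓ) le_rfl h ((A.mono ht).trans hacj1.le)
    · rw [if_neg ht]
      have htb : A.x p.succ ≤ A.x t := A.mono (Fin.castSucc_lt_iff_succ_le.mp (not_le.1 ht))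
      rcases le_total cj1 (A.x t) with h | h
      · rw [max_eq_left h]
        simp [CakeInstance.ival]
      · rw [max_eq_right h]
        have hz := aux_zero C ℓ hcj0 hcj11 (hzval ℓ hℓ) (hcjb.le.trans htb) h le_rfl
        unfold CakeInstance.ival at hz ⊢
        rw [intervalIntegral.integral_symm, hz, neg_zero]
  have hcorr' : ∀ ℓ, ℓ ≠ i → ∀ t, C.ival ℓ (A.x t) (shiftX A p cj cj1 t) = 0 := by
    intro ℓ hℓ t
    have h := hcorr ℓ hℓ t
    unfold CakeInstance.ival at h ⊢
    rw [intervalIntegral.integral_symm, h, neg_zero]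
  have hdecomp : ∀ (ℓ : Fin n) (q : Fin n),
      C.ival ℓ (shiftX A p cj cj1 q.castSucc) (shiftX A p cj cj1 q.succ)
        = C.ival ℓ (shiftX A p cj cj1 q.castSucc) (A.x q.castSucc)
          + C.ival ℓ (A.x q.castSucc) (A.x q.succ)
          + C.ival ℓ (A.x q.succ) (shiftX A p cj cj1 q.succ) := by
    intro ℓ q
    have i1 := aux_ii C ℓ (hBx01 q.castSucc) (hx01 q.castSucc)
    have i2 := aux_ii C ℓ (hx01 q.castSucc) (hx01 q.succ)
    have i3 := aux_ii C ℓ (hx01 q.succ) (hBx01 q.succ)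
    unfold CakeInstance.ival
    rw [intervalIntegral.integral_add_adjacent_intervals i1 i2,
        intervalIntegral.integral_add_adjacent_intervals (i1.trans i2) i3]
  have hBeq : ∀ ℓ, ℓ ≠ i → ∀ m, cval C B ℓ m = cval C A ℓ m := by
    intro ℓ hℓ m
    rw [hcvalB, hdecomp ℓ (A.σ.symm m), hcorr ℓ hℓ, hcorr' ℓ hℓ, zero_add, add_zero]
    rfl
  have hile : ∀ m, m ≠ i → cval C B i m ≤ cval C A i m := by
    intro m hm
    have hq : A.σ.symm m ≠ p := by
      intro h
      apply hm
      have := congrArg A.σ h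
      simpa [hpdef] using this
    rw [hcvalB]
    rcases lt_or_gt_of_ne hq with h | h
    · have h1 : (A.σ.symm m).castSucc ≤ p.castSucc := Fin.castSucc_le_castSucc_iff.mpr h.le
      have h2 : (A.σ.symm m).succ ≤ p.castSucc := Fin.succ_le_castSucc_iff.mpr h
      simp only [shiftX]
      rw [if_pos h1, if_pos h2]
      exact aux_min_le C i cj (hx01 _) (hx01 _) (A.mono (Fin.castSucc_le_succ _))
    · have h1 : ¬ (A.σ.symm m).castSucc ≤ p.castSucc := not_le.2 h
      have h2 : ¬ (A.σ.symm m).succ ≤ p.castSucc := fun hc =>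
        h1 ((Fin.castSucc_le_succ _).trans hc)
      simp only [shiftX]
      rw [if_neg h1, if_neg h2]
      exact aux_max_le C i cj1 (hx01 _) (hx01 _) (A.mono (Fin.castSucc_le_succ _))
  have hBpc : shiftX A p cj cj1 p.castSucc = min (A.x p.castSucc) cj := by
    simp only [shiftX]; rw [if_pos le_rfl]
  have hBps : shiftX A p cj cj1 p.succ = max (A.x p.succ) cj1 := by
    simp only [shiftX]; rw [if_neg (not_le.2 (Fin.castSucc_lt_succ : p.castSucc < p.succ))]
  have key : C.sval i (W.pieceSet j \ cpiece A i)
      ≤ C.ival i (min (A.x p.castSucc) cj) (A.x p.castSucc)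
        + C.ival i (A.x p.succ) (max (A.x p.succ) cj1) := by
    have hseteq : W.pieceSet j \ cpiece A i
        = Set.Ico cj (A.x p.castSucc) ∪ Set.Ioc (A.x p.succ) cj1 := by
      simp only [XkWitness.pieceSet, cpiece, ← hpdef, ← hcjdef, ← hcj1def]
      ext z
      simp only [Set.mem_diff, Set.mem_Icc, Set.mem_union, Set.mem_Ico, Set.mem_Ioc,
        not_and, not_le]
      constructor
      · rintro ⟨⟨h1, h2⟩, h3⟩
        by_cases hza : z < A.x p.castSucc
        · exact Or.inl ⟨h1, hza⟩
        · exact Or.inr ⟨h3 (not_lt.1 hza), h2⟩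
      · rintro (⟨h1, h2⟩ | ⟨h1, h2⟩)
        · exact ⟨⟨h1, le_of_lt (h2.trans hacj1)⟩, fun hc => absurd hc (not_le.2 h2)⟩
        · exact ⟨⟨le_of_lt (hcjb.trans h1), h2⟩, fun _ => h1⟩
    rw [hseteq, CakeInstance.sval]
    have hI : IntegrableOn (C.d i) (Set.Icc (0:ℝ) 1) volume := (C.cont i).integrableOn_Icc
    have hsub1 : Set.Ico cj (A.x p.castSucc) ⊆ Set.Icc (0:ℝ) 1 :=
      fun z hz => ⟨hcj0.trans hz.1, hz.2.le.trans (hx01 p.castSucc).2⟩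
    have hsub2 : Set.Ioc (A.x p.succ) cj1 ⊆ Set.Icc (0:ℝ) 1 :=
      fun z hz => ⟨(hx01 p.succ).1.trans hz.1.le, hz.2.trans hcj11⟩
    have hdisj : Disjoint (Set.Ico cj (A.x p.castSucc)) (Set.Ioc (A.x p.succ) cj1) := by
      rw [Set.disjoint_left]
      rintro z ⟨_, h2⟩ ⟨h3, _⟩
      have := h2.trans_le hab
      exact absurd h3 (not_lt.2 this.le)
    rw [setIntegral_union hdisj measurableSet_Ioc (hI.mono_set hsub1) (hI.mono_set hsub2)]
    have part1 : ∫ x in Set.Ico cj (A.x p.castSucc), C.d i x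
        ≤ C.ival i (min (A.x p.castSucc) cj) (A.x p.castSucc) := by
      rcases le_total cj (A.x p.castSucc) with h | h
      · rw [min_eq_right h, CakeInstance.ival, intervalIntegral.integral_of_le h,
          integral_Ioc_eq_integral_Ioo, integral_Ico_eq_integral_Ioo]
      · rw [Set.Ico_eq_empty (not_lt.2 h), min_eq_left h]
        simp [CakeInstance.ival]
    have part2 : ∫ x in Set.Ioc (A.x p.succ) cj1, C.d i x
        ≤ C.ival i (A.x p.succ) (max (A.x p.succ) cj1) := by
      rcases le_total (A.x p.succ) cj1 with h | h
      · rw [max_eq_right h, CakeInstance.ival, intervalIntegral.integral_of_le h]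
      · rw [Set.Ioc_eq_empty (not_lt.2 h), max_eq_left h]
        simp [CakeInstance.ival]
    exact add_le_add part1 part2
  have hstrict : cval C A i i < cval C B i i := by
    have hdec := hdecomp i p
    rw [hBpc, hBps] at hdec
    have e1 : cval C B i i
        = C.ival i (min (A.x p.castSucc) cj) (A.x p.castSucc) + cval C A i i
          + C.ival i (A.x p.succ) (max (A.x p.succ) cj1) := by
      have h := hcvalB i i
      rw [← hpdef] at h
      rw [h, hBpc, hBps, hdec]
      rfl
    rw [e1]
    linarith [key, hval]
  refine ⟨B, ?_, ?_⟩
  · intro ℓ m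
    by_cases hℓ : ℓ = i
    · subst hℓ
      by_cases hm : m = ℓ
      · subst hm; exact le_rfl
      · exact (hile m hm).trans ((hA ℓ m).trans hstrict.le)
    · rw [hBeq ℓ hℓ m, hBeq ℓ hℓ ℓ]
      exact hA ℓ m
  · unfold cWelfare
    apply Finset.sum_lt_sum
    · intro ℓ _
      by_cases hℓ : ℓ = i
      · subst hℓ; exact hstrict.le
      · exact le_of_eq (hBeq ℓ hℓ ℓ).symm
    · exact ⟨i, Finset.mem_univ i, hstrict⟩
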